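/- Let (W, S) be an irreducible Coxeter system with S indexed by a set I, and let J ⊆ I be such that W acts 2-transitively on the coset space W/W_J. Then I \ J is a singleton {i}, i.e. W = W_J ∪ W_J s_i W_J. -/

import Mathlib

open List Real

namespace Stmt14Aux

variable {B : Type*} {W : Type*} [Group W] {M : CoxeterMatrix B} (cs : CoxeterSystem M W)

/-- The entries of the bilinear form of the geometric representation.
Note `M i j = 0` gives `-cos 0 = -1` as desired, and `M i i = 1` gives `-cos π = 1`. -/
noncomputable def km (M : CoxeterMatrix B) (i j : B) : ℝ := - Real.cos (Real.pi / (M i j))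

lemma km_symm (i j : B) : km M i j = km M j i := by rw [km, km, M.symmetric]

lemma km_diag (i : B) : km M i i = 1 := by
  rw [km, M.diagonal]; norm_num

/-- Pairing with the basis vector `e i`. -/
noncomputable def Bi (M : CoxeterMatrix B) (i : B) : (B →₀ ℝ) →ₗ[ℝ] ℝ :=
  Finsupp.linearCombination ℝ (km M i)

/-- basis vector -/
noncomputable def ee (i : B) : (B →₀ ℝ) := Finsupp.single i 1

lemma Bi_ee (i j : B) : Bi M i (ee j) = km M i j := by
  simp [Bi, ee, Finsupp.linearCombination_single]

/-- The geometric reflection. -/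
noncomputable def sig (M : CoxeterMatrix B) (i : B) : Module.End ℝ (B →₀ ℝ) :=
  LinearMap.id - (2:ℝ) • ((Bi M i).smulRight (ee i))

lemma sig_apply (i : B) (v : B →₀ ℝ) : sig M i v = v - (2 * Bi M i v) • ee i := by
  simp [sig, two_smul, smul_smul, two_mul, add_smul]

lemma sig_ee (i j : B) : sig M i (ee j) = ee j - (2 * km M i j) • ee i := by
  rw [sig_apply, Bi_ee]

lemma sig_sq (i : B) : sig M i * sig M i = 1 := by
  apply LinearMap.ext
  intro v
  show sig M i (sig M i v) = v
  rw [sig_apply, sig_apply, map_sub, map_smul, Bi_ee, km_diag]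
  simp only [smul_eq_mul, mul_one]
  module

end Stmt14Aux

namespace Stmt14Aux

variable {B : Type*}

lemma trig1 (θ x : ℝ) : Real.sin (x + 2*θ) = 2 * Real.cos θ * Real.sin (x + θ) - Real.sin x := by
  rw [Real.sin_add x (2*θ), Real.cos_two_mul, Real.sin_two_mul, Real.sin_add x θ]
  ring

lemma trig2 (θ x : ℝ) : Real.sin (x + 3*θ) =
    (4 * Real.cos θ ^ 2 - 1) * Real.sin (x + θ) - 2 * Real.cos θ * Real.sin x := by
  have h1 : x + 3*θ = (x + θ) + 2*θ := by ring
  rw [h1, trig1 θ (x + θ)]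
  have h2 : x + θ + θ = x + 2*θ := by ring
  rw [h2, trig1 θ x]
  ring

variable {M : CoxeterMatrix B}

section mainpow

variable {i j : B}

/-- The key computation: order of the product of two geometric reflections. -/
lemma sig_mul_pow (hij : i ≠ j) (hm0 : M i j ≠ 0) :
    ((sig M i) * (sig M j)) ^ (M i j) = 1 := by
  set m := M i j with hm
  have hm2 : 2 ≤ m := by
    rcases Nat.lt_or_ge m 2 with h | h
    · interval_cases m
      · exact absurd rfl hm0
      · exact absurd hm.symm (M.off_diagonal i j hij)
    · exact h
  set θ : ℝ := Real.pi / m with hθ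
  have hmR : (0:ℝ) < (m:ℝ) := by positivity
  have hmR' : (m:ℝ) ≠ 0 := hmR.ne'
  have hθ0 : 0 < θ := by positivity
  have hθπ : θ < Real.pi := by
    rw [hθ]
    calc Real.pi / m ≤ Real.pi / 2 := by
          apply div_le_div_of_nonneg_left Real.pi_pos.le (by norm_num) (by exact_mod_cast hm2)
      _ < Real.pi := by linarith [Real.pi_pos]
  set c : ℝ := Real.cos θ with hc
  set sθ : ℝ := Real.sin θ with hsθ
  have hsθ0 : 0 < sθ := Real.sin_pos_of_pos_of_lt_pi hθ0 hθπ
  have hkij : km M i j = -c := by rw [km, hc, hθ, hm]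
  have hkji : km M j i = -c := by rw [← km_symm, hkij]
  set P := (sig M i) * (sig M j) with hP
  have Pei : P (ee i) = (4*c^2 - 1) • ee i + (2*c) • ee j := by
    show sig M i (sig M j (ee i)) = _
    rw [sig_ee, hkji, map_sub, map_smul, sig_ee, sig_ee, km_diag, hkij]
    module
  have Pej : P (ee j) = (-(2*c)) • ee i + (-1 : ℝ) • ee j := by
    show sig M i (sig M j (ee j)) = _
    rw [sig_ee, km_diag, map_sub, map_smul, sig_ee, hkij]
    module
  -- the closed formula for powers
  have key : ∀ k : ℕ,
      (P^k) (ee i) = (Real.sin (2*k*θ + θ)/sθ) • ee i + (Real.sin (2*k*θ)/sθ) • ee j ∧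
      (P^k) (ee j) = (-(Real.sin (2*k*θ)/sθ)) • ee i + (-(Real.sin (2*k*θ - θ)/sθ)) • ee j := by
    intro k
    induction k with
    | zero =>
      constructor
      · rw [pow_zero]
        push_cast
        rw [show (2*(0:ℝ)*θ + θ) = θ by ring, show (2*(0:ℝ)*θ) = 0 by ring, Real.sin_zero,
          div_self hsθ0.ne']
        simp
      · rw [pow_zero]
        push_cast
        rw [show (2*(0:ℝ)*θ - θ) = -θ by ring, show (2*(0:ℝ)*θ) = 0 by ring, Real.sin_zero,
          Real.sin_neg, neg_div, neg_neg, div_self hsθ0.ne']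
        simp
    | succ k ih =>
      obtain ⟨ih1, ih2⟩ := ih
      constructor
      · rw [pow_succ', Module.End.mul_apply, ih1, map_add, map_smul, map_smul, Pei, Pej]
        push_cast
        rw [show 2*((k:ℝ)+1)*θ + θ = 2*(k:ℝ)*θ + 3*θ by ring,
            show 2*((k:ℝ)+1)*θ = 2*(k:ℝ)*θ + 2*θ by ring,
            trig2 θ (2*(k:ℝ)*θ), trig1 θ (2*(k:ℝ)*θ)]
        module
      · rw [pow_succ', Module.End.mul_apply, ih2, map_add, map_smul, map_smul, Pei, Pej]
        push_cast
        have t2 : Real.sin (2*((k:ℝ)+1)*θ) =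
            (4*c^2-1)*Real.sin (2*(k:ℝ)*θ) - 2*c*Real.sin (2*(k:ℝ)*θ - θ) := by
          have h := trig2 θ (2*(k:ℝ)*θ - θ)
          rw [show 2*(k:ℝ)*θ - θ+3*θ = 2*((k:ℝ)+1)*θ by ring,
            show 2*(k:ℝ)*θ - θ+θ = 2*(k:ℝ)*θ by ring] at h
          exact h
        have t1 : Real.sin (2*((k:ℝ)+1)*θ - θ) =
            2*c*Real.sin (2*(k:ℝ)*θ) - Real.sin (2*(k:ℝ)*θ - θ) := by
          have h := trig1 θ (2*(k:ℝ)*θ - θ)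
          rw [show 2*(k:ℝ)*θ - θ+2*θ = 2*((k:ℝ)+1)*θ - θ by ring,
            show 2*(k:ℝ)*θ - θ+θ = 2*(k:ℝ)*θ by ring] at h
          exact h
        rw [t2, t1]
        module
  -- evaluate at k = m
  have h2pi : 2*(m:ℝ)*θ = 2*Real.pi := by
    rw [hθ]
    field_simp
  have Pmi : (P^m) (ee i) = ee i := by
    rw [(key m).1, h2pi, Real.sin_add, Real.sin_two_pi, Real.cos_two_pi]
    rw [show (0*Real.cos θ + 1*Real.sin θ)/sθ = sθ/sθ by rw [hsθ]; ring, div_self hsθ0.ne']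
    simp
  have Pmj : (P^m) (ee j) = ee j := by
    rw [(key m).2, h2pi, Real.sin_sub, Real.sin_two_pi, Real.cos_two_pi]
    rw [show (0*Real.cos θ - 1*Real.sin θ)/sθ = -(sθ/sθ) by rw [hsθ]; ring, div_self hsθ0.ne']
    simp
  -- fixed part
  have hc2 : 1 - c^2 ≠ 0 := by
    have h1 : sθ^2 + c^2 = 1 := Real.sin_sq_add_cos_sq θ
    have h2 : 1 - c^2 = sθ^2 := by linarith
    rw [h2]
    positivity
  apply LinearMap.ext
  intro v
  set a : ℝ := (Bi M i v + c * Bi M j v)/(1-c^2) with ha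
  set b : ℝ := (Bi M j v + c * Bi M i v)/(1-c^2) with hb
  set v' : (B →₀ ℝ) := v - a • ee i - b • ee j with hv'
  have hBiv' : Bi M i v' = 0 := by
    rw [hv', map_sub, map_sub, map_smul, map_smul, Bi_ee, Bi_ee, km_diag, hkij, ha, hb]
    field_simp
    linear_combination (-(Bi M i v)) * mul_inv_cancel₀ hc2
  have hBjv' : Bi M j v' = 0 := by
    rw [hv', map_sub, map_sub, map_smul, map_smul, Bi_ee, Bi_ee, km_diag, hkji, ha, hb]
    field_simp
    linear_combination (-(Bi M j v)) * mul_inv_cancel₀ hc2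
  have hfix : P v' = v' := by
    rw [hP, Module.End.mul_apply, sig_apply j, hBjv']
    simp only [mul_zero, zero_smul, sub_zero]
    rw [sig_apply i, hBiv']
    simp
  have hfixpow : ∀ n : ℕ, (P^n) v' = v' := by
    intro n
    induction n with
    | zero => simp
    | succ n ihn => rw [pow_succ', Module.End.mul_apply, ihn, hfix]
  have hdecomp : v = v' + a • ee i + b • ee j := by rw [hv']; abel
  show (P^m) v = v
  rw [hdecomp, map_add, map_add, map_smul, map_smul, Pmi, Pmj, hfixpow]

end mainpow

/-- The geometric representation is liftable. -/
lemma sig_liftable : CoxeterMatrix.IsLiftable M (sig M) := by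
  intro i j
  by_cases hij : i = j
  · subst hij
    rw [M.diagonal, pow_one, sig_sq]
  · by_cases hm0 : M i j = 0
    · rw [hm0, pow_zero]
    · exact sig_mul_pow hij hm0

/-- Injectivity of the simple reflections. -/
theorem simple_inj {W : Type*} [Group W] (cs : CoxeterSystem M W) :
    Function.Injective cs.simple := by
  intro i j hs
  by_contra hij
  have h1 : cs.lift ⟨sig M, sig_liftable⟩ (cs.simple i) = sig M i := cs.lift_apply_simple _ i
  have h2 : cs.lift ⟨sig M, sig_liftable⟩ (cs.simple j) = sig M j := cs.lift_apply_simple _ j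
  rw [hs, h2] at h1
  have h3 := congrArg (fun (f : Module.End ℝ (B →₀ ℝ)) => (f (ee i)) i) h1
  simp only [sig_ee, km_diag] at h3
  rw [Finsupp.sub_apply, Finsupp.sub_apply, Finsupp.smul_apply, Finsupp.smul_apply] at h3
  simp only [ee, Finsupp.single_eq_same, Finsupp.single_eq_of_ne hij] at h3
  norm_num at h3

end Stmt14Aux

namespace Stmt14Aux

variable {B : Type*} {W : Type*} [Group W] {M : CoxeterMatrix B} (cs : CoxeterSystem M W)

/-! ### The cocycle representation, used to prove the exchange property. -/

/-- Semidirect-like product `(W → ZMod 2) ⋊ W`. -/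
structure DG (W : Type*) where
  a : W → ZMod 2
  w : W

/-- Conjugation action of `W` on `W → ZMod 2`. -/
def cact (w : W) (a : W → ZMod 2) : W → ZMod 2 := fun x => a (w⁻¹ * x * w)

lemma cact_add (w : W) (a b : W → ZMod 2) : cact w (a + b) = cact w a + cact w b := rfl

lemma cact_cact (w v : W) (a : W → ZMod 2) : cact w (cact v a) = cact (w * v) a := by
  funext x
  simp [cact, mul_assoc]

lemma cact_one (a : W → ZMod 2) : cact (1:W) a = a := by
  funext x
  simp [cact]

lemma cact_zero (w : W) : cact w (0 : W → ZMod 2) = 0 := rfl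

open Classical in
/-- Indicator function. -/
noncomputable def dd (t : W) : W → ZMod 2 := fun x => if x = t then 1 else 0

open Classical in
lemma dd_apply (t x : W) : dd t x = if x = t then 1 else 0 := rfl

lemma cact_dd (w t : W) : cact w (dd t) = dd (w * t * w⁻¹) := by
  funext x
  rw [cact, dd_apply, dd_apply]
  by_cases h : w⁻¹ * x * w = t
  · rw [if_pos h, if_pos (by rw [← h]; group)]
  · rw [if_neg h, if_neg (fun hx => h (by rw [hx]; group))]

instance : Monoid (DG W) where
  mul x y := ⟨x.a + cact x.w y.a, x.w * y.w⟩
  one := ⟨0, 1⟩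
  mul_assoc x y z := by
    show DG.mk ((x.a + cact x.w y.a) + cact (x.w * y.w) z.a) ((x.w * y.w) * z.w) =
      DG.mk (x.a + cact x.w (y.a + cact y.w z.a)) (x.w * (y.w * z.w))
    rw [DG.mk.injEq]
    exact ⟨by rw [cact_add, cact_cact, add_assoc], mul_assoc _ _ _⟩
  one_mul x := by
    show DG.mk (0 + cact 1 x.a) (1 * x.w) = x
    rw [cact_one, zero_add, one_mul]
  mul_one x := by
    show DG.mk (x.a + cact x.w 0) (x.w * 1) = x
    rw [cact_zero, add_zero, mul_one]

lemma DG_mul (a b : W → ZMod 2) (p q : W) :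
    (⟨a, p⟩ : DG W) * (⟨b, q⟩ : DG W) = ⟨a + cact p b, p * q⟩ := rfl

lemma DG_one : (1 : DG W) = ⟨0, 1⟩ := rfl

lemma DG_pow (a : W → ZMod 2) (p : W) (n : ℕ) :
    ((⟨a, p⟩ : DG W))^n = ⟨∑ k ∈ Finset.range n, cact (p^k) a, p^n⟩ := by
  induction n with
  | zero =>
    rw [pow_zero, Finset.range_zero, Finset.sum_empty, pow_zero]
    exact DG_one
  | succ n ih =>
    rw [pow_succ, ih, DG_mul, Finset.sum_range_succ, pow_succ]

/-- The sum over a doubled range. -/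
lemma sum_range_double {A : Type*} [AddCommMonoid A] (g : ℕ → A) (n : ℕ) :
    ∑ k ∈ Finset.range (2*n), g k = ∑ k ∈ Finset.range n, (g (2*k) + g (2*k+1)) := by
  induction n with
  | zero => simp
  | succ n ih =>
    rw [Finset.sum_range_succ, ← ih, show 2*(n+1) = (2*n+1)+1 by ring,
      Finset.sum_range_succ, Finset.sum_range_succ, add_assoc]

end Stmt14Aux

namespace Stmt14Aux

variable {B : Type*} {W : Type*} [Group W] {M : CoxeterMatrix B} (cs : CoxeterSystem M W)

section liftable

lemma conj_pow_helper {p x : W} (hx : x * x = 1) (hconj : x * p * x = p⁻¹) (b : ℕ) :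
    p^b * x = x * (p^b)⁻¹ := by
  have hxinv : x⁻¹ = x := inv_eq_of_mul_eq_one_right hx
  have h1 : x * p^b * x = (p^b)⁻¹ := by
    have h2 : (x * p * x⁻¹)^b = x * p^b * x⁻¹ := conj_pow
    rw [hxinv] at h2
    rw [← h2, hconj, inv_pow]
  calc p^b * x = (x * x) * (p^b * x) := by rw [hx, one_mul]
    _ = x * (x * p^b * x) := by group
    _ = x * (p^b)⁻¹ := by rw [h1]

/-- The function defining the cocycle representation. -/
noncomputable def fDG (cs : CoxeterSystem M W) : B → DG W :=
  fun i => ⟨dd (cs.simple i), cs.simple i⟩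

lemma fDG_liftable : CoxeterMatrix.IsLiftable M (fDG cs) := by
  intro i j
  set si := cs.simple i with hsi
  set sj := cs.simple j with hsj
  set p := si * sj with hp
  set u := si * sj * si with hu
  set m := M i j with hm
  have hpm : p^m = 1 := cs.simple_mul_simple_pow i j
  have hsii : si * si = 1 := cs.simple_mul_simple_self i
  have hsjj : sj * sj = 1 := cs.simple_mul_simple_self j
  have huu : u * u = 1 := by
    rw [hu]
    calc si * sj * si * (si * sj * si) = si * sj * (si * si) * (sj * si) := by group
      _ = si * (sj * sj) * si := by rw [hsii]; group
      _ = si * si := by rw [hsjj]; group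
      _ = 1 := hsii
  have hconji : si * p * si = p⁻¹ := by
    rw [hp]
    calc si * (si * sj) * si = (si * si) * (sj * si) := by group
      _ = sj * si := by rw [hsii, one_mul]
      _ = (si * sj)⁻¹ := by
          rw [mul_inv_rev, cs.inv_simple, cs.inv_simple]
  have hconju : u * p * u = p⁻¹ := by
    rw [hu, hp]
    calc si * sj * si * (si * sj) * (si * sj * si)
        = si * sj * (si * si) * sj * si * sj * si := by group
      _ = si * (sj * sj) * si * sj * si := by rw [hsii, mul_one]; group
      _ = (si * si) * sj * si := by rw [hsjj, mul_one]
      _ = sj * si := by rw [hsii, one_mul]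
      _ = (si * sj)⁻¹ := by rw [mul_inv_rev, cs.inv_simple, cs.inv_simple]
  -- the sequence of deltas
  classical
  set E : ℕ → (W → ZMod 2) := fun n =>
    if Even n then dd (p^(n/2) * si * (p^(n/2))⁻¹) else dd (p^(n/2) * u * (p^(n/2))⁻¹) with hE
  have E2k : ∀ k, E (2*k) = dd (p^k * si * (p^k)⁻¹) := by
    intro k
    rw [hE]
    simp only
    rw [if_pos ⟨k, by ring⟩, Nat.mul_div_cancel_left k (by norm_num)]
  have E2k1 : ∀ k, E (2*k+1) = dd (p^k * u * (p^k)⁻¹) := by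
    intro k
    rw [hE]
    simp only
    rw [if_neg (by simp [parity_simps]), show (2*k+1)/2 = k by omega]
  have claimA : ∀ k, cact (p^k) (dd si + dd u) = E (2*k) + E (2*k+1) := by
    intro k
    rw [cact_add, cact_dd, cact_dd, E2k, E2k1]
  have claimB : ∀ n, E (n + m) = E n := by
    intro n
    rcases Nat.even_or_odd n with ⟨a, hn⟩ | ⟨a, hn⟩ <;>
      rcases Nat.even_or_odd m with ⟨b, hmm⟩ | ⟨b, hmm⟩
    · -- n = 2a, m = 2b
      rw [show n + m = 2*(a+b) by omega, E2k, show n = 2*a by omega, E2k]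
      have hbb : p^b * p^b = 1 := by
        rw [← pow_add, show b + b = m by omega, hpm]
      have hb1 : p^b * si = si * (p^b)⁻¹ := conj_pow_helper hsii hconji b
      refine congrArg dd ?_
      calc p^(a+b) * si * (p^(a+b))⁻¹ = p^a * (p^b * si) * (p^b)⁻¹ * (p^a)⁻¹ := by
            rw [pow_add]; group
        _ = p^a * si * ((p^b)⁻¹ * (p^b)⁻¹) * (p^a)⁻¹ := by rw [hb1]; group
        _ = p^a * si * (p^b * p^b)⁻¹ * (p^a)⁻¹ := by rw [mul_inv_rev]
        _ = p^a * si * (p^a)⁻¹ := by rw [hbb, inv_one, mul_one]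
    · -- n = 2a, m = 2b+1 : E(n+m) = E(2(a+b)+1) should equal E(2a) : uses p^{2b+1} = 1
      rw [show n + m = 2*(a+b)+1 by omega, E2k1, show n = 2*a by omega, E2k]
      have hb1 : p^b * u = u * (p^b)⁻¹ := conj_pow_helper huu hconju b
      have hkey : p^b * u * (p^b)⁻¹ = si := by
        rw [hb1]
        have h2 : u * ((p^b)⁻¹ * (p^b)⁻¹) = si := by
          rw [← mul_inv_rev, ← pow_add]
          have : p^(b+b) = p⁻¹ := by
            have : p * p^(b+b) = 1 := by
              rw [← pow_succ', show b+b+1 = m by omega, hpm]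
            rw [← inv_eq_of_mul_eq_one_right this]
          rw [this, inv_inv]
          rw [hu, hp]
          calc si * sj * si * (si * sj) = si * sj * (si * si) * sj := by group
            _ = si * (sj * sj) := by rw [hsii, mul_one]; group
            _ = si := by rw [hsjj, mul_one]
        calc u * (p^b)⁻¹ * (p^b)⁻¹ = u * ((p^b)⁻¹ * (p^b)⁻¹) := by group
          _ = si := h2
      refine congrArg dd ?_
      calc p^(a+b) * u * (p^(a+b))⁻¹ = p^a * (p^b * u * (p^b)⁻¹) * (p^a)⁻¹ := by
            rw [pow_add]; group
        _ = p^a * si * (p^a)⁻¹ := by rw [hkey]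
    · -- n = 2a+1, m = 2b
      rw [show n + m = 2*(a+b)+1 by omega, E2k1, show n = 2*a+1 by omega, E2k1]
      have hbb : p^b * p^b = 1 := by
        rw [← pow_add, show b + b = m by omega, hpm]
      have hb1 : p^b * u = u * (p^b)⁻¹ := conj_pow_helper huu hconju b
      refine congrArg dd ?_
      calc p^(a+b) * u * (p^(a+b))⁻¹ = p^a * (p^b * u) * (p^b)⁻¹ * (p^a)⁻¹ := by
            rw [pow_add]; group
        _ = p^a * u * ((p^b)⁻¹ * (p^b)⁻¹) * (p^a)⁻¹ := by rw [hb1]; group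
        _ = p^a * u * (p^b * p^b)⁻¹ * (p^a)⁻¹ := by rw [mul_inv_rev]
        _ = p^a * u * (p^a)⁻¹ := by rw [hbb, inv_one, mul_one]
    · -- n = 2a+1, m = 2b+1 : E(n+m) = E(2(a+b+1)) = E(2a+1)
      rw [show n + m = 2*(a+b+1) by omega, E2k, show n = 2*a+1 by omega, E2k1]
      have hb1 : p^(b+1) * si = si * (p^(b+1))⁻¹ := conj_pow_helper hsii hconji (b+1)
      have hkey : p^(b+1) * si * (p^(b+1))⁻¹ = u := by
        rw [hb1]
        have h2 : p^(b+1) * p^(b+1) = p := by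
          rw [← pow_add, show b+1+(b+1) = m + 1 by omega, pow_succ, hpm, one_mul]
        have h3 : (p^(b+1))⁻¹ * (p^(b+1))⁻¹ = p⁻¹ := by
          rw [← mul_inv_rev, h2]
        calc si * (p^(b+1))⁻¹ * (p^(b+1))⁻¹ = si * ((p^(b+1))⁻¹ * (p^(b+1))⁻¹) := by group
          _ = si * p⁻¹ := by rw [h3]
          _ = u := by
              rw [hp, hu, mul_inv_rev, cs.inv_simple, cs.inv_simple]
              group
              rw [← hsi, ← hsj]
      refine congrArg dd ?_
      calc p^(a+b+1) * si * (p^(a+b+1))⁻¹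
          = p^a * (p^(b+1) * si * (p^(b+1))⁻¹) * (p^a)⁻¹ := by
            rw [show a+b+1 = a+(b+1) by omega, pow_add]; group
        _ = p^a * u * (p^a)⁻¹ := by rw [hkey]
  -- assemble
  have hcs : cact si (dd sj) = dd u := by
    rw [cact_dd, cs.inv_simple, ← hsi, hu]
  have hsum : ∑ k ∈ Finset.range m, cact (p^k) (dd si + dd u) = 0 := by
    calc ∑ k ∈ Finset.range m, cact (p^k) (dd si + dd u)
        = ∑ k ∈ Finset.range m, (E (2*k) + E (2*k+1)) :=
          Finset.sum_congr rfl (fun k _ => claimA k)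
      _ = ∑ n ∈ Finset.range (2*m), E n := (sum_range_double E m).symm
      _ = ∑ n ∈ Finset.range m, E n + ∑ n ∈ Finset.Ico m (2*m), E n := by
          rw [Finset.range_eq_Ico, ← Finset.sum_Ico_consecutive E (Nat.zero_le m) (by omega), Finset.range_eq_Ico]
      _ = ∑ n ∈ Finset.range m, E n + ∑ n ∈ Finset.range m, E (m + n) := by
          rw [Finset.sum_Ico_eq_sum_range, show 2*m - m = m by omega]
      _ = ∑ n ∈ Finset.range m, (E n + E n) := by
          rw [← Finset.sum_add_distrib]
          exact Finset.sum_congr rfl (fun n _ => by rw [add_comm m n, claimB n])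
      _ = 0 := by
          apply Finset.sum_eq_zero
          intro n _
          funext x
          simp only [Pi.add_apply, Pi.zero_apply]
          have hz : ∀ z : ZMod 2, z + z = 0 := by decide
          exact hz _
  show ((⟨dd si, si⟩ : DG W) * ⟨dd sj, sj⟩) ^ m = 1
  rw [DG_mul, hcs, DG_pow, hsum, ← hp, hpm, DG_one]

end liftable

end Stmt14Aux

namespace Stmt14Aux

variable {B : Type*} {W : Type*} [Group W] {M : CoxeterMatrix B} (cs : CoxeterSystem M W)

lemma DG_mul_a (x y : DG W) : (x * y).a = x.a + cact x.w y.a := rfl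

lemma DG_mul_w (x y : DG W) : (x * y).w = x.w * y.w := rfl

/-- The cocycle homomorphism. -/
noncomputable def ΦDG : W →* DG W := cs.lift ⟨fDG cs, fDG_liftable cs⟩

lemma ΦDG_simple (i : B) : ΦDG cs (cs.simple i) = ⟨dd (cs.simple i), cs.simple i⟩ :=
  cs.lift_apply_simple _ i

/-- The cocycle. -/
noncomputable def NN (w : W) : W → ZMod 2 := (ΦDG cs w).a

lemma NN_simple_mul (i : B) (w : W) :
    NN cs (cs.simple i * w) = dd (cs.simple i) + cact (cs.simple i) (NN cs w) := by
  rw [NN, map_mul, DG_mul_a, ΦDG_simple, NN]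

lemma NN_one : NN cs 1 = 0 := by
  rw [NN, map_one]
  rfl

/-- Additive hom version of `cact`. -/
def cactH (w : W) : (W → ZMod 2) →+ (W → ZMod 2) where
  toFun := cact w
  map_zero' := cact_zero w
  map_add' := cact_add w

lemma NN_wordProd (ω : List B) : NN cs (cs.wordProd ω) = ((cs.leftInvSeq ω).map dd).sum := by
  induction ω with
  | nil => rw [cs.wordProd_nil, NN_one, cs.leftInvSeq_nil, List.map_nil, List.sum_nil]
  | cons i ω ih =>
    rw [cs.wordProd_cons, NN_simple_mul, ih]
    have hl : cs.leftInvSeq (i :: ω) =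
        cs.simple i :: List.map (MulAut.conj (cs.simple i)) (cs.leftInvSeq ω) := rfl
    rw [hl, List.map_cons, List.sum_cons]
    congr 1
    have h1 : cact (cs.simple i) (((cs.leftInvSeq ω).map dd).sum) =
        (((cs.leftInvSeq ω).map dd).map (cactH (cs.simple i))).sum := by
      exact map_list_sum (cactH (cs.simple i)) _
    rw [h1, List.map_map, List.map_map]
    apply congrArg
    apply List.map_congr_left
    intro t _
    simp only [Function.comp_apply]
    show cact (cs.simple i) (dd t) = dd ((MulAut.conj (cs.simple i)) t)
    rw [cact_dd, MulAut.conj_apply]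

lemma dd_sum_count [DecidableEq W] (l : List W) (t : W) :
    ((l.map dd).sum) t = (l.count t : ZMod 2) := by
  induction l with
  | nil => simp
  | cons x l ih =>
    rw [List.map_cons, List.sum_cons, Pi.add_apply, ih, List.count_cons, dd_apply]
    push_cast
    by_cases h : t = x
    · rw [if_pos h, if_pos (by simp [h])]
      ring
    · rw [if_neg h, if_neg (by simpa using Ne.symm h)]
      ring

/-- Strong exchange property, for simple reflections. -/
lemma simple_mem_leftInvSeq {w : W} {i : B} (hlt : cs.length (cs.simple i * w) < cs.length w)
    {ω : List B} (hred : cs.IsReduced ω) (hw : cs.wordProd ω = w) :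
    cs.simple i ∈ cs.leftInvSeq ω := by
  classical
  obtain ⟨ω₂, hred₂, hw₂⟩ := cs.exists_reduced_word' (cs.simple i * w)
  have hlen₂ : ω₂.length = cs.length (cs.simple i * w) := by
    rw [hw₂]
    exact Eq.symm hred₂
  have hπ₃ : cs.wordProd (i :: ω₂) = w := by
    rw [cs.wordProd_cons, ← hw₂, cs.simple_mul_simple_cancel_left]
  have hlsucc : cs.length (cs.simple i * w) + 1 = cs.length w := by
    rcases cs.length_simple_mul w i with h | h
    · omega
    · exact h
  have hred₃ : cs.IsReduced (i :: ω₂) := by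
    unfold CoxeterSystem.IsReduced
    rw [hπ₃, List.length_cons, hlen₂, hlsucc]
  have hmem₃ : cs.simple i ∈ cs.leftInvSeq (i :: ω₂) := by
    have : cs.leftInvSeq (i :: ω₂) =
        cs.simple i :: List.map (MulAut.conj (cs.simple i)) (cs.leftInvSeq ω₂) := rfl
    rw [this]
    exact List.mem_cons_self
  have hN1 : NN cs w (cs.simple i) = 1 := by
    rw [← hπ₃, NN_wordProd, dd_sum_count,
      List.count_eq_one_of_mem (CoxeterSystem.IsReduced.nodup_leftInvSeq cs hred₃) hmem₃]
    rfl
  by_contra hnot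
  rw [← hw, NN_wordProd, dd_sum_count, List.count_eq_zero.mpr hnot] at hN1
  simp at hN1

/-- Any word can be replaced by a reduced word with the same product, using
only letters of the original word. -/
lemma exists_reduced_subword : ∀ (n : ℕ) (ω : List B), ω.length ≤ n →
    ∃ ω' : List B, (∀ b ∈ ω', b ∈ ω) ∧ cs.wordProd ω' = cs.wordProd ω ∧ cs.IsReduced ω' := by
  intro n
  induction n with
  | zero =>
    intro ω hω
    rw [Nat.le_zero, List.length_eq_zero_iff] at hω
    subst hω
    exact ⟨[], by simp, rfl, by unfold CoxeterSystem.IsReduced; simp⟩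
  | succ n ih =>
    intro ω hω
    by_cases hred : cs.IsReduced ω
    · exact ⟨ω, fun b hb => hb, rfl, hred⟩
    rcases ω with _ | ⟨ihd, ωt⟩
    · exact absurd (by unfold CoxeterSystem.IsReduced; simp) hred
    obtain ⟨ωt', hsub', hπ', hred'⟩ := ih ωt (by simp only [List.length_cons] at hω; omega)
    by_cases h2 : cs.IsReduced (ihd :: ωt')
    · refine ⟨ihd :: ωt', ?_, ?_, h2⟩
      · intro b hb
        rcases List.mem_cons.mp hb with h | h
        · exact h ▸ List.mem_cons_self
        · exact List.mem_cons_of_mem _ (hsub' b h)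
      · rw [cs.wordProd_cons, cs.wordProd_cons, hπ']
    · have hlt : cs.length (cs.simple ihd * cs.wordProd ωt') < cs.length (cs.wordProd ωt') := by
        rcases cs.length_simple_mul (cs.wordProd ωt') ihd with h | h
        · exfalso
          apply h2
          unfold CoxeterSystem.IsReduced
          rw [cs.wordProd_cons, h, List.length_cons]
          have h6 : cs.length (cs.wordProd ωt') = ωt'.length := hred'
          omega
        · omega
      have hmem := simple_mem_leftInvSeq cs hlt hred' rfl
      obtain ⟨jj, hjj, hjje⟩ := List.mem_iff_getElem.mp hmem
      have hgetd : (cs.leftInvSeq ωt').getD jj 1 = cs.simple ihd := by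
        rw [List.getD_eq_getElem _ _ hjj, hjje]
      have herase : cs.wordProd (ωt'.eraseIdx jj) = cs.wordProd (ihd :: ωt) := by
        rw [← cs.getD_leftInvSeq_mul_wordProd, hgetd, cs.wordProd_cons, hπ']
      have hjlt : jj < ωt'.length := by
        rw [cs.length_leftInvSeq] at hjj
        exact hjj
      have hlen : (ωt'.eraseIdx jj).length ≤ n := by
        rw [List.length_eraseIdx, if_pos hjlt]
        have h3 : ωt'.length = cs.length (cs.wordProd ωt') := hred'.symm
        have h4 : cs.length (cs.wordProd ωt') ≤ ωt.length := by
          rw [hπ']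
          exact cs.length_wordProd_le ωt
        have h5 : ωt.length ≤ n := by
          have := hω
          simp only [List.length_cons] at this
          omega
        omega
      obtain ⟨ω'', hsub'', hπ'', hred''⟩ := ih (ωt'.eraseIdx jj) hlen
      refine ⟨ω'', ?_, by rw [hπ'', herase], hred''⟩
      intro b hb
      have hb1 : b ∈ ωt'.eraseIdx jj := hsub'' b hb
      have hb2 : b ∈ ωt' := List.eraseIdx_subset hb1
      exact List.mem_cons_of_mem _ (hsub' b hb2)

/-- Every element of a standard parabolic subgroup has a word over the generating set. -/
lemma closure_word {K : Set B} {w : W} (hw : w ∈ Subgroup.closure (cs.simple '' K)) :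
    ∃ ω : List B, (∀ b ∈ ω, b ∈ K) ∧ cs.wordProd ω = w := by
  induction hw using Subgroup.closure_induction with
  | mem x hx =>
    obtain ⟨k, hk, rfl⟩ := hx
    exact ⟨[k], by simpa using hk, cs.wordProd_singleton k⟩
  | one => exact ⟨[], by simp, cs.wordProd_nil⟩
  | mul x y hx hy ihx ihy =>
    obtain ⟨ω₁, h₁, hπ₁⟩ := ihx
    obtain ⟨ω₂, h₂, hπ₂⟩ := ihy
    refine ⟨ω₁ ++ ω₂, ?_, by rw [cs.wordProd_append, hπ₁, hπ₂]⟩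
    intro b hb
    rcases List.mem_append.mp hb with h | h
    · exact h₁ b h
    · exact h₂ b h
  | inv x hx ihx =>
    obtain ⟨ω, h, hπ⟩ := ihx
    refine ⟨ω.reverse, ?_, by rw [cs.wordProd_reverse, hπ]⟩
    intro b hb
    exact h b (List.mem_reverse.mp hb)

/-- The parabolic fact: a simple reflection outside `K` is not in the standard
parabolic subgroup generated by `K`. -/
theorem simple_not_mem_closure {K : Set B} {j : B} (hj : j ∉ K) :
    cs.simple j ∉ Subgroup.closure (cs.simple '' K) := by
  intro hmem
  obtain ⟨ω, hsub, hπ⟩ := closure_word cs hmem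
  obtain ⟨ω', hsub', hπ', hred'⟩ := exists_reduced_subword cs ω.length ω le_rfl
  have hlen : ω'.length = 1 := by
    have hred'' : cs.length (cs.wordProd ω') = ω'.length := hred'
    rw [hπ', hπ, cs.length_simple] at hred''
    omega
  obtain ⟨k, rfl⟩ := List.length_eq_one_iff.mp hlen
  have hk : cs.simple k = cs.simple j := by
    rw [← cs.wordProd_singleton, hπ', hπ]
  have : k = j := simple_inj cs hk
  subst this
  exact hj (hsub k (hsub' k (List.mem_cons_self)))

end Stmt14Aux

/-- If `(W,S)` is an irreducible Coxeter system and `W` acts 2-transitively on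
`W/W_J`, then `I \ J` is a singleton `{i}`, i.e. `W = W_J ∪ W_J s_i W_J`. -/
theorem stmt14 {B W : Type*} [Group W] {M : CoxeterMatrix B}
    (cs : CoxeterSystem M W)
    (hirr : ∀ K : Set B, (∀ i ∈ K, ∀ j ∉ K, M i j = 2) → K = ∅ ∨ K = Set.univ)
    (J : Set B) (hJ : J ≠ Set.univ)
    (WJ : Subgroup W) (hWJ : WJ = Subgroup.closure (cs.simple '' J))
    (h2 : ∀ x₁ x₂ y₁ y₂ : W ⧸ WJ, x₁ ≠ x₂ → y₁ ≠ y₂ →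
      ∃ w : W, w • x₁ = y₁ ∧ w • x₂ = y₂) :
    ∃ i : B, i ∉ J ∧ (∀ j : B, j ∉ J → j = i) ∧
      ∀ w : W, w ∈ WJ ∨ ∃ u ∈ WJ, ∃ v ∈ WJ, w = u * cs.simple i * v := by
  obtain ⟨i, hi⟩ := (Set.ne_univ_iff_exists_notMem J).mp hJ
  have hpara : ∀ j : B, j ∉ J → cs.simple j ∉ WJ := by
    intro j hj
    rw [hWJ]
    exact Stmt14Aux.simple_not_mem_closure cs hj
  -- membership in the quotient
  have hq : ∀ g : W, ((g : W ⧸ WJ) = ((1 : W) : W ⧸ WJ)) ↔ g ∈ WJ := by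
    intro g
    rw [QuotientGroup.eq]
    simp
  have hsmul : ∀ g u : W, g • ((u : W) : W ⧸ WJ) = ((g * u : W) : W ⧸ WJ) := fun g u => rfl
  -- the key double coset consequence of 2-transitivity
  have hdc : ∀ g g' : W, g ∉ WJ → g' ∉ WJ → ∃ u ∈ WJ, ∃ v ∈ WJ, g' = u * g * v := by
    intro g g' hg hg'
    have hne1 : ((1 : W) : W ⧸ WJ) ≠ (g : W ⧸ WJ) := by
      intro h
      exact hg ((hq g).mp h.symm)
    have hne2 : ((1 : W) : W ⧸ WJ) ≠ (g' : W ⧸ WJ) := by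
      intro h
      exact hg' ((hq g').mp h.symm)
    obtain ⟨u, hu1, hu2⟩ := h2 ((1:W) : W ⧸ WJ) ((g:W) : W ⧸ WJ)
      ((1:W) : W ⧸ WJ) ((g':W) : W ⧸ WJ) hne1 hne2
    rw [hsmul, mul_one] at hu1
    rw [hsmul] at hu2
    have huWJ : u ∈ WJ := (hq u).mp hu1
    have hv := (QuotientGroup.eq).mp hu2
    refine ⟨u, huWJ, (u * g)⁻¹ * g', hv, ?_⟩
    group
  refine ⟨i, hi, ?_, ?_⟩
  · -- uniqueness
    intro j hj
    by_contra hji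
    -- s j ∈ WJ * s i * WJ ⊆ closure (J ∪ {i}), but j ∉ J ∪ {i}
    obtain ⟨u, hu, v, hv, huv⟩ := hdc (cs.simple i) (cs.simple j) (hpara i hi) (hpara j hj)
    have hjKi : j ∉ (J ∪ {i} : Set B) := by
      intro hmem
      rcases hmem with h | h
      · exact hj h
      · exact hji h
    apply Stmt14Aux.simple_not_mem_closure cs hjKi
    have hsub : Subgroup.closure (cs.simple '' J) ≤
        Subgroup.closure (cs.simple '' (J ∪ {i})) :=
      Subgroup.closure_mono (Set.image_mono Set.subset_union_left)
    have huc : u ∈ Subgroup.closure (cs.simple '' (J ∪ {i})) := hsub (hWJ ▸ hu)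
    have hvc : v ∈ Subgroup.closure (cs.simple '' (J ∪ {i})) := hsub (hWJ ▸ hv)
    have hic : cs.simple i ∈ Subgroup.closure (cs.simple '' (J ∪ {i})) :=
      Subgroup.subset_closure ⟨i, Or.inr rfl, rfl⟩
    rw [huv]
    exact Subgroup.mul_mem _ (Subgroup.mul_mem _ huc hic) hvc
  · -- coverage
    intro w
    by_cases hw : w ∈ WJ
    · exact Or.inl hw
    · exact Or.inr (by
        obtain ⟨u, hu, v, hv, huv⟩ := hdc (cs.simple i) w (hpara i hi) hw
        exact ⟨u, hu, v, hv, huv⟩)
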